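/- Let P = ⟨D,Γ,Δ⟩ be a planning problem in the action language B with consistent action theory (D,Γ), and suppose (D,Γ) is deterministic, i.e., |Φ(a,s)| ≤ 1 for every action a and state s. Then the action sequence a0,a1,...,a_{n−1} is a plan achieving Δ (i.e., Φ̂(⟨a0,...,a_{n−1}⟩,s0) ≠ ∅ and Δ ⊆ s for the state s in Φ̂(⟨a0,...,a_{n−1}⟩,s0), where s0 is the initial state) if and only if there exists an answer set M of Π(P,n) with occ(a_i,i) ∈ M for every i ∈ {0,...,n−1}. -/

import Mathlib

/- # Action language B -/

/-- A fluent literal: a fluent or its negation. -/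
inductive Lit (F : Type) where
  | pos : F → Lit F
  | neg : F → Lit F

namespace Lit
/-- The complement of a fluent literal. -/
def compl {F : Type} : Lit F → Lit F
  | .pos f => .neg f
  | .neg f => .pos f
end Lit

/-- A set of fluent literals is consistent if it contains no fluent together with
its negation. -/
def ConsistentLits {F : Type} (s : Set (Lit F)) : Prop :=
  ∀ f : F, ¬ (Lit.pos f ∈ s ∧ Lit.neg f ∈ s)

/-- A set of fluent literals is complete if it contains each fluent or its negation. -/
def CompleteLits {F : Type} (s : Set (Lit F)) : Prop :=
  ∀ f : F, Lit.pos f ∈ s ∨ Lit.neg f ∈ s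

/-- A static causal law `caused(prem, concl)`. -/
structure StaticLaw (F : Type) where
  prem : Set (Lit F)
  concl : Lit F

/-- A dynamic causal law `causes(act, concl, prem)`. -/
structure DynamicLaw (F A : Type) where
  act : A
  concl : Lit F
  prem : Set (Lit F)

/-- An executability condition `executable(act, prem)`. -/
structure ExecLaw (F A : Type) where
  act : A
  prem : Set (Lit F)

/-- A domain in the action language B. -/
structure BDomain (F A : Type) where
  statics : Set (StaticLaw F)
  dynamics : Set (DynamicLaw F A)
  execs : Set (ExecLaw F A)

/-- `v` is closed under the set `K` of static causal laws. -/
def ClosedUnder {F : Type} (K : Set (StaticLaw F)) (v : Set (Lit F)) : Prop :=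
  ∀ r ∈ K, r.prem ⊆ v → r.concl ∈ v

/-- `IsCl K u v`: `v` is the least consistent set of literals containing `u`
and closed under `K`. -/
def IsCl {F : Type} (K : Set (StaticLaw F)) (u v : Set (Lit F)) : Prop :=
  u ⊆ v ∧ ConsistentLits v ∧ ClosedUnder K v ∧
    ∀ w, u ⊆ w → ConsistentLits w → ClosedUnder K w → v ⊆ w

/-- A state: a maximal (complete) consistent set of fluent literals closed under
the static causal laws. -/
def IsState {F A : Type} (D : BDomain F A) (s : Set (Lit F)) : Prop :=
  CompleteLits s ∧ ConsistentLits s ∧ ClosedUnder D.statics s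

/-- Action `a` is executable in `s`. -/
def Executable {F A : Type} (D : BDomain F A) (a : A) (s : Set (Lit F)) : Prop :=
  ∃ e ∈ D.execs, e.act = a ∧ e.prem ⊆ s

/-- The direct effects `e(a,s)` of action `a` in `s`. -/
def directEffects {F A : Type} (D : BDomain F A) (a : A) (s : Set (Lit F)) : Set (Lit F) :=
  { l | ∃ d ∈ D.dynamics, d.act = a ∧ d.concl = l ∧ d.prem ⊆ s }

/-- The transition function `Φ` of a domain. -/
def Phi {F A : Type} (D : BDomain F A) (a : A) (s : Set (Lit F)) : Set (Set (Lit F)) :=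
  { s' | Executable D a s ∧ IsState D s' ∧
      IsCl D.statics (directEffects D a s ∪ (s ∩ s')) s' }

/-- A planning problem `⟨D, Γ, Δ⟩`; `init` is the set of literals `f` with
`initially(f) ∈ Γ`, and `goal` is `Δ`. -/
structure PlanningProblem (F A : Type) where
  dom : BDomain F A
  init : Set (Lit F)
  goal : Set (Lit F)

/-- The action theory `(D,Γ)` is consistent: `Φ(a,s) ≠ ∅` whenever `a` is executable
in state `s`, and the initial state is a state. -/
def ConsistentTheory {F A : Type} (P : PlanningProblem F A) : Prop :=
  (∀ (a : A) (s : Set (Lit F)), IsState P.dom s → Executable P.dom a s →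
      (Phi P.dom a s).Nonempty) ∧
  IsState P.dom P.init

/-- `s0 a0 s1 ... a_{n-1} s_n` is a trajectory. -/
def IsTrajectory {F A : Type} (D : BDomain F A) (n : ℕ)
    (ss : ℕ → Set (Lit F)) (acts : ℕ → A) : Prop :=
  IsState D (ss 0) ∧ ∀ i < n, ss (i + 1) ∈ Phi D (acts i) (ss i)

/- # Answer set programming -/

/-- A normal rule (`head = none` gives a constraint). -/
structure NRule (At : Type) where
  head : Option At
  pos : Set At
  neg : Set At

/-- A cardinality-1 choice rule `1{choices}1 ← pos, not neg`. -/
structure CRule (At : Type) where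
  choices : Set At
  pos : Set At
  neg : Set At

/-- A program: normal rules (and constraints) plus choice rules. -/
structure Program (At : Type) where
  normals : Set (NRule At)
  choiceRules : Set (CRule At)

/-- `X` is closed under the Gelfond–Lifschitz reduct of `P` w.r.t. `M`. The reduct
contains `h ← pos` for every normal rule with head `h` whose negative body is
disjoint from `M`, and `a ← pos` for every choice rule with negative body disjoint
from `M` and every chosen atom `a ∈ M`. -/
def ReductClosed {At : Type} (P : Program At) (M X : Set At) : Prop :=
  (∀ r ∈ P.normals, r.neg ∩ M = ∅ → r.pos ⊆ X → ∀ h, r.head = some h → h ∈ X) ∧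
  (∀ c ∈ P.choiceRules, c.neg ∩ M = ∅ → c.pos ⊆ X → ∀ a ∈ c.choices, a ∈ M → a ∈ X)

/-- `M` satisfies all constraints of `P`. -/
def SatConstraints {At : Type} (P : Program At) (M : Set At) : Prop :=
  ∀ r ∈ P.normals, r.head = none → ¬ (r.pos ⊆ M ∧ r.neg ∩ M = ∅)

/-- `M` satisfies the choice rules of `P`: when the body holds, exactly one chosen
atom is in `M`. -/
def SatChoices {At : Type} (P : Program At) (M : Set At) : Prop :=
  ∀ c ∈ P.choiceRules, c.pos ⊆ M → c.neg ∩ M = ∅ → ∃! a, a ∈ c.choices ∧ a ∈ M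

/-- `M` is an answer set (stable model) of `P`: it satisfies constraints and choice
rules and is the least model of the reduct of `P` w.r.t. `M`. -/
def AnswerSet {At : Type} (P : Program At) (M : Set At) : Prop :=
  SatConstraints P M ∧ SatChoices P M ∧ ReductClosed P M M ∧
    ∀ X, ReductClosed P M X → M ⊆ X

/- # The encoding Π(P,n) -/

/-- Atoms of the program `Π(P,n)`. -/
inductive PAtom (F A : Type) where
  | holds : Lit F → ℕ → PAtom F A
  | occ : A → ℕ → PAtom F A
  | possible : A → ℕ → PAtom F A
  | goal : PAtom F A

/-- `holds(φ,t)`: the set of atoms `holds(l,t)` for `l ∈ φ`. -/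
def holdsSet {F A : Type} (φ : Set (Lit F)) (t : ℕ) : Set (PAtom F A) :=
  { x | ∃ l ∈ φ, x = PAtom.holds l t }

/-- The standard ASP encoding `Π(P,n)` of a planning problem with horizon `n`. -/
def PiProgram {F A : Type} (P : PlanningProblem F A) (n : ℕ) : Program (PAtom F A) where
  normals :=
    -- facts holds(f,0) for initially(f) ∈ Γ
    { r | ∃ l ∈ P.init, r = ⟨some (PAtom.holds l 0), ∅, ∅⟩ } ∪
    -- possible(a,T) ← holds(φ,T)
    { r | ∃ e ∈ P.dom.execs, ∃ t ≤ n,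
        r = ⟨some (PAtom.possible e.act t), holdsSet e.prem t, ∅⟩ } ∪
    -- holds(f,T+1) ← occ(a,T), holds(φ,T)
    { r | ∃ d ∈ P.dom.dynamics, ∃ t < n,
        r = ⟨some (PAtom.holds d.concl (t + 1)),
             insert (PAtom.occ d.act t) (holdsSet d.prem t), ∅⟩ } ∪
    -- holds(f,T) ← holds(φ,T)
    { r | ∃ sl ∈ P.dom.statics, ∃ t ≤ n,
        r = ⟨some (PAtom.holds sl.concl t), holdsSet sl.prem t, ∅⟩ } ∪
    -- ← occ(A,T), not possible(A,T)
    { r | ∃ (a : A), ∃ t < n,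
        r = ⟨none, {PAtom.occ a t}, {PAtom.possible a t}⟩ } ∪
    -- inertia
    { r | ∃ (l : Lit F), ∃ t < n,
        r = ⟨some (PAtom.holds l (t + 1)), {PAtom.holds l t},
             {PAtom.holds l.compl (t + 1)}⟩ } ∪
    -- ← holds(F,T), holds(¬F,T)
    { r | ∃ (f : F), ∃ t ≤ n,
        r = ⟨none, {PAtom.holds (Lit.pos f) t, PAtom.holds (Lit.neg f) t}, ∅⟩ } ∪
    -- goal ← holds(Δ,n)  and  ← not goal
    { ⟨some PAtom.goal, holdsSet P.goal n, ∅⟩,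
      ⟨none, ∅, {PAtom.goal}⟩ }
  choiceRules :=
    -- 1{occ(A,T) : action(A)}1 for T < n
    { c | ∃ t < n, c = ⟨{ x | ∃ a : A, x = PAtom.occ a t }, ∅, ∅⟩ }

/-- The extension `Φ̂` of `Φ` to action sequences: `Φ̂(⟨⟩,s) = {s}` and
`Φ̂(a::α, s) = ⋃_{s' ∈ Φ(a,s)} Φ̂(α,s')` when `Φ(a,s) ≠ ∅` and all recursive values
are nonempty, and `∅` otherwise. -/
def PhiHat {F A : Type} (D : BDomain F A) : List A → Set (Lit F) → Set (Set (Lit F))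
  | [], s => {s}
  | a :: rest, s =>
      { s'' | ((Phi D a s).Nonempty ∧
                ∀ s' ∈ Phi D a s, (PhiHat D rest s').Nonempty) ∧
              ∃ s' ∈ Phi D a s, s'' ∈ PhiHat D rest s' }

/-- The action theory is deterministic: `|Φ(a,s)| ≤ 1` for every action `a`
and state `s`. -/
def Deterministic {F A : Type} (D : BDomain F A) : Prop :=
  ∀ (a : A) (s : Set (Lit F)), IsState D s → (Phi D a s).Subsingleton

namespace ASPAux

variable {F A : Type}

@[simp] lemma compl_compl (l : Lit F) : l.compl.compl = l := by
  cases l <;> rfl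

lemma compl_not_mem {s : Set (Lit F)} (hc : ConsistentLits s) {l : Lit F}
    (hl : l ∈ s) : l.compl ∉ s := by
  cases l with
  | pos f => exact fun h => hc f ⟨hl, h⟩
  | neg f => exact fun h => hc f ⟨h, hl⟩

lemma mem_of_compl_not_mem {s : Set (Lit F)} (hc : CompleteLits s) {l : Lit F}
    (hl : l.compl ∉ s) : l ∈ s := by
  cases l with
  | pos f => exact (hc f).resolve_right hl
  | neg f => exact (hc f).resolve_left hl

lemma compl_mem_of_not_mem {s : Set (Lit F)} (hc : CompleteLits s) {l : Lit F}
    (hl : l ∉ s) : l.compl ∈ s := by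
  cases l with
  | pos f => exact (hc f).resolve_left hl
  | neg f => exact (hc f).resolve_right hl

lemma not_mem_and_compl {s : Set (Lit F)} (hc : ConsistentLits s) {l : Lit F} :
    ¬ (l ∈ s ∧ l.compl ∈ s) := fun ⟨h1, h2⟩ => compl_not_mem hc h1 h2

lemma holdsSet_subset_iff {φ : Set (Lit F)} {t : ℕ} {M : Set (PAtom F A)} :
    holdsSet φ t ⊆ M ↔ ∀ l ∈ φ, PAtom.holds l t ∈ M := by
  constructor
  · intro h l hl; exact h ⟨l, hl, rfl⟩
  · rintro h x ⟨l, hl, rfl⟩; exact h l hl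

/- ## Chain lemmas for PhiHat -/

lemma phiHat_chain (D : BDomain F A) :
    ∀ (n : ℕ) (acts : ℕ → A) (s s'' : Set (Lit F)),
      s'' ∈ PhiHat D (List.ofFn fun i : Fin n => acts i) s →
      ∃ ss : ℕ → Set (Lit F), ss 0 = s ∧ ss n = s'' ∧
        ∀ i < n, ss (i + 1) ∈ Phi D (acts i) (ss i) := by
  intro n
  induction n with
  | zero =>
    intro acts s s'' h
    simp only [List.ofFn_zero, PhiHat, Set.mem_singleton_iff] at h
    exact ⟨fun _ => s, rfl, h.symm ▸ rfl, fun i hi => absurd hi (Nat.not_lt_zero i)⟩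
  | succ n ih =>
    intro acts s s'' h
    rw [List.ofFn_succ] at h
    obtain ⟨-, s', hs', hrest⟩ := h
    have hrest' : s'' ∈ PhiHat D (List.ofFn fun i : Fin n => (fun j => acts (j + 1)) i) s' := by
      convert hrest using 3 <;> rfl
    obtain ⟨ss', h0, hn, hstep⟩ := ih (fun j => acts (j + 1)) s' s'' hrest'
    refine ⟨fun i => Nat.casesOn i s (fun k => ss' k), rfl, hn, ?_⟩
    intro i hi
    cases i with
    | zero => simpa [h0] using hs'
    | succ k => exact hstep k (Nat.lt_of_succ_lt_succ hi)

lemma chain_phiHat (D : BDomain F A) (hdet : Deterministic D) :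
    ∀ (n : ℕ) (acts : ℕ → A) (ss : ℕ → Set (Lit F)),
      IsState D (ss 0) →
      (∀ i < n, ss (i + 1) ∈ Phi D (acts i) (ss i)) →
      ss n ∈ PhiHat D (List.ofFn fun i : Fin n => acts i) (ss 0) := by
  intro n
  induction n with
  | zero => intro acts ss _ _; simp [List.ofFn_zero, PhiHat]
  | succ n ih =>
    intro acts ss h0 hstep
    rw [List.ofFn_succ]
    have h1 : ss 1 ∈ Phi D (acts 0) (ss 0) := hstep 0 (Nat.succ_pos n)
    have hs1 : IsState D (ss 1) := h1.2.1
    have ihres : ss (n + 1) ∈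
        PhiHat D (List.ofFn fun i : Fin n => acts (i + 1)) (ss 1) :=
      ih (fun j => acts (j + 1)) (fun i => ss (i + 1)) hs1
        (fun i hi => hstep (i + 1) (Nat.succ_lt_succ hi))
    refine ⟨⟨⟨ss 1, h1⟩, ?_⟩, ss 1, h1, ?_⟩
    · intro s' hs'
      have : s' = ss 1 := hdet (acts 0) (ss 0) h0 hs' h1
      subst this
      exact ⟨ss (n + 1), by convert ihres using 3 <;> rfl⟩
    · convert ihres using 3 <;> rfl

lemma phiHat_unique (D : BDomain F A) (hdet : Deterministic D) :
    ∀ (n : ℕ) (acts : ℕ → A) (ss : ℕ → Set (Lit F)),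
      IsState D (ss 0) →
      (∀ i < n, ss (i + 1) ∈ Phi D (acts i) (ss i)) →
      ∀ s ∈ PhiHat D (List.ofFn fun i : Fin n => acts i) (ss 0), s = ss n := by
  intro n
  induction n with
  | zero =>
    intro acts ss _ _ s hs
    simpa [List.ofFn_zero, PhiHat] using hs
  | succ n ih =>
    intro acts ss h0 hstep s hs
    rw [List.ofFn_succ] at hs
    obtain ⟨-, s', hs', hrest⟩ := hs
    have h1 : ss 1 ∈ Phi D (acts 0) (ss 0) := hstep 0 (Nat.succ_pos n)
    have : s' = ss 1 := hdet (acts 0) (ss 0) h0 hs' h1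
    subst this
    exact ih (fun j => acts (j + 1)) (fun i => ss (i + 1)) h1.2.1
      (fun i hi => hstep (i + 1) (Nat.succ_lt_succ hi)) s (by convert hrest using 3 <;> rfl)

end ASPAux
namespace ASPAux

variable {F A : Type}

/- ## Rule membership helpers for `PiProgram` -/

section RuleMem
variable {P : PlanningProblem F A} {n : ℕ}

lemma normals_cases {r : NRule (PAtom F A)} (hr : r ∈ (PiProgram P n).normals) :
    (((((((∃ l ∈ P.init, r = ⟨some (PAtom.holds l 0), ∅, ∅⟩) ∨
    (∃ e ∈ P.dom.execs, ∃ t ≤ n,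
        r = ⟨some (PAtom.possible e.act t), holdsSet e.prem t, ∅⟩)) ∨
    (∃ d ∈ P.dom.dynamics, ∃ t < n,
        r = ⟨some (PAtom.holds d.concl (t + 1)),
             insert (PAtom.occ d.act t) (holdsSet d.prem t), ∅⟩)) ∨
    (∃ sl ∈ P.dom.statics, ∃ t ≤ n,
        r = ⟨some (PAtom.holds sl.concl t), holdsSet sl.prem t, ∅⟩)) ∨
    (∃ (a : A), ∃ t < n,
        r = ⟨none, {PAtom.occ a t}, {PAtom.possible a t}⟩)) ∨
    (∃ (l : Lit F), ∃ t < n,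
        r = ⟨some (PAtom.holds l (t + 1)), {PAtom.holds l t},
             {PAtom.holds l.compl (t + 1)}⟩)) ∨
    (∃ (f : F), ∃ t ≤ n,
        r = ⟨none, {PAtom.holds (Lit.pos f) t, PAtom.holds (Lit.neg f) t}, ∅⟩)) ∨
    (r = ⟨some PAtom.goal, holdsSet P.goal n, ∅⟩ ∨
     r = ⟨none, ∅, {PAtom.goal}⟩) := hr

lemma mem_norm_fact {l : Lit F} (hl : l ∈ P.init) :
    (⟨some (PAtom.holds l 0), ∅, ∅⟩ : NRule (PAtom F A)) ∈ (PiProgram P n).normals :=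
  Or.inl (Or.inl (Or.inl (Or.inl (Or.inl (Or.inl (Or.inl ⟨l, hl, rfl⟩))))))

lemma mem_norm_exec {e : ExecLaw F A} (he : e ∈ P.dom.execs) {t : ℕ} (ht : t ≤ n) :
    (⟨some (PAtom.possible e.act t), holdsSet e.prem t, ∅⟩ : NRule (PAtom F A)) ∈
      (PiProgram P n).normals :=
  Or.inl (Or.inl (Or.inl (Or.inl (Or.inl (Or.inl (Or.inr ⟨e, he, t, ht, rfl⟩))))))

lemma mem_norm_dyn {d : DynamicLaw F A} (hd : d ∈ P.dom.dynamics) {t : ℕ} (ht : t < n) :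
    (⟨some (PAtom.holds d.concl (t + 1)),
      insert (PAtom.occ d.act t) (holdsSet d.prem t), ∅⟩ : NRule (PAtom F A)) ∈
      (PiProgram P n).normals :=
  Or.inl (Or.inl (Or.inl (Or.inl (Or.inl (Or.inr ⟨d, hd, t, ht, rfl⟩)))))

lemma mem_norm_static {sl : StaticLaw F} (hsl : sl ∈ P.dom.statics) {t : ℕ} (ht : t ≤ n) :
    (⟨some (PAtom.holds sl.concl t), holdsSet sl.prem t, ∅⟩ : NRule (PAtom F A)) ∈
      (PiProgram P n).normals :=
  Or.inl (Or.inl (Or.inl (Or.inl (Or.inr ⟨sl, hsl, t, ht, rfl⟩))))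

lemma mem_norm_inertia (l : Lit F) {t : ℕ} (ht : t < n) :
    (⟨some (PAtom.holds l (t + 1)), {PAtom.holds l t},
      {PAtom.holds l.compl (t + 1)}⟩ : NRule (PAtom F A)) ∈ (PiProgram P n).normals :=
  Or.inl (Or.inl (Or.inr ⟨l, t, ht, rfl⟩))

lemma mem_norm_goal :
    (⟨some PAtom.goal, holdsSet P.goal n, ∅⟩ : NRule (PAtom F A)) ∈
      (PiProgram P n).normals :=
  Or.inr (Or.inl rfl)

lemma mem_choice {t : ℕ} (ht : t < n) :
    (⟨{ x | ∃ a : A, x = PAtom.occ a t }, ∅, ∅⟩ : CRule (PAtom F A)) ∈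
      (PiProgram P n).choiceRules :=
  ⟨t, ht, rfl⟩

lemma choice_cases {c : CRule (PAtom F A)} (hc : c ∈ (PiProgram P n).choiceRules) :
    ∃ t < n, c = ⟨{ x | ∃ a : A, x = PAtom.occ a t }, ∅, ∅⟩ := hc

end RuleMem

/- ## The canonical model of a trajectory -/

def canonM (P : PlanningProblem F A) (n : ℕ) (acts : ℕ → A)
    (ss : ℕ → Set (Lit F)) : Set (PAtom F A) :=
  {x | (∃ t ≤ n, ∃ l ∈ ss t, x = PAtom.holds l t) ∨
       (∃ t < n, x = PAtom.occ (acts t) t) ∨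
       (∃ t ≤ n, ∃ a : A, Executable P.dom a (ss t) ∧ x = PAtom.possible a t) ∨
       x = PAtom.goal}

variable {P : PlanningProblem F A} {n : ℕ} {acts : ℕ → A} {ss : ℕ → Set (Lit F)}

lemma canonM_holds {l : Lit F} {t : ℕ} :
    PAtom.holds l t ∈ canonM P n acts ss ↔ t ≤ n ∧ l ∈ ss t := by
  constructor
  · rintro (⟨t', ht', l', hl', h⟩ | ⟨t', ht', h⟩ | ⟨t', ht', a, ha, h⟩ | h) <;>
      first
      | (obtain ⟨rfl, rfl⟩ : l = l' ∧ t = t' := by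
          injection h with h1 h2; exact ⟨h1, h2⟩
         exact ⟨ht', hl'⟩)
      | simp at h
  · rintro ⟨ht, hl⟩
    exact Or.inl ⟨t, ht, l, hl, rfl⟩

lemma canonM_occ {a : A} {t : ℕ} :
    PAtom.occ a t ∈ canonM P n acts ss ↔ t < n ∧ a = acts t := by
  constructor
  · rintro (⟨t', ht', l', hl', h⟩ | ⟨t', ht', h⟩ | ⟨t', ht', a', ha', h⟩ | h) <;>
      first
      | (obtain ⟨rfl, rfl⟩ : a = acts t' ∧ t = t' := by
          injection h with h1 h2; exact ⟨h1, h2⟩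
         exact ⟨ht', rfl⟩)
      | simp at h
  · rintro ⟨ht, rfl⟩
    exact Or.inr (Or.inl ⟨t, ht, rfl⟩)

lemma canonM_possible {a : A} {t : ℕ} :
    PAtom.possible a t ∈ canonM P n acts ss ↔ t ≤ n ∧ Executable P.dom a (ss t) := by
  constructor
  · rintro (⟨t', ht', l', hl', h⟩ | ⟨t', ht', h⟩ | ⟨t', ht', a', ha', h⟩ | h) <;>
      first
      | (obtain ⟨rfl, rfl⟩ : a = a' ∧ t = t' := by
          injection h with h1 h2; exact ⟨h1, h2⟩
         exact ⟨ht', ha'⟩)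
      | simp at h
  · rintro ⟨ht, ha⟩
    exact Or.inr (Or.inr (Or.inl ⟨t, ht, a, ha, rfl⟩))

lemma canonM_goal : PAtom.goal ∈ canonM P n acts ss :=
  Or.inr (Or.inr (Or.inr rfl))

lemma canonM_holdsSet_subset {φ : Set (Lit F)} {t : ℕ} (ht : t ≤ n)
    (h : φ ⊆ ss t) : holdsSet φ t ⊆ canonM P n acts ss :=
  holdsSet_subset_iff.mpr fun l hl => canonM_holds.mpr ⟨ht, h hl⟩

end ASPAux
namespace ASPAux

variable {F A : Type} {P : PlanningProblem F A} {n : ℕ} {acts : ℕ → A}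
  {ss : ℕ → Set (Lit F)}

theorem canonM_answerSet
    (hstate : ∀ t ≤ n, IsState P.dom (ss t))
    (hstep : ∀ t < n, ss (t + 1) ∈ Phi P.dom (acts t) (ss t))
    (hinit : ss 0 = P.init)
    (hgoal : P.goal ⊆ ss n) :
    AnswerSet (PiProgram P n) (canonM P n acts ss) := by
  refine ⟨?_, ?_, ⟨?_, ?_⟩, ?_⟩
  · -- SatConstraints
    rintro r hr hhead ⟨hpos, hneg⟩
    rcases normals_cases hr with
      (((((((⟨l, hl, rfl⟩ | ⟨e, he, t, ht, rfl⟩) | ⟨d, hd, t, ht, rfl⟩) |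
        ⟨sl, hsl, t, ht, rfl⟩) | ⟨a, t, ht, rfl⟩) | ⟨l, t, ht, rfl⟩) |
        ⟨f, t, ht, rfl⟩) | (rfl | rfl)) <;>
      try simp at hhead
    · -- occ constraint
      have hocc : PAtom.occ a t ∈ canonM P n acts ss := hpos rfl
      obtain ⟨-, rfl⟩ := canonM_occ.mp hocc
      have hexec : Executable P.dom (acts t) (ss t) := (hstep t ht).1
      have hp : PAtom.possible (acts t) t ∈ canonM P n acts ss :=
        canonM_possible.mpr ⟨Nat.le_of_lt ht, hexec⟩
      exact Set.eq_empty_iff_forall_notMem.mp hneg _ ⟨rfl, hp⟩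
    · -- fluent consistency constraint
      have h1 := (canonM_holds.mp (hpos (Set.mem_insert _ _))).2
      have h2 := (canonM_holds.mp (hpos (Set.mem_insert_of_mem _ rfl))).2
      exact (hstate t ht).2.1 f ⟨h1, h2⟩
    · -- ← not goal
      exact Set.eq_empty_iff_forall_notMem.mp hneg _ ⟨rfl, canonM_goal⟩
  · -- SatChoices
    intro c hc hpos hneg
    obtain ⟨t, ht, rfl⟩ := choice_cases hc
    refine ⟨PAtom.occ (acts t) t, ⟨⟨acts t, rfl⟩, canonM_occ.mpr ⟨ht, rfl⟩⟩, ?_⟩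
    rintro x ⟨⟨a, rfl⟩, hx⟩
    obtain ⟨-, rfl⟩ := canonM_occ.mp hx
    rfl
  · -- ReductClosed: normal rules
    intro r hr hneg hpos h hh
    rcases normals_cases hr with
      (((((((⟨l, hl, rfl⟩ | ⟨e, he, t, ht, rfl⟩) | ⟨d, hd, t, ht, rfl⟩) |
        ⟨sl, hsl, t, ht, rfl⟩) | ⟨a, t, ht, rfl⟩) | ⟨l, t, ht, rfl⟩) |
        ⟨f, t, ht, rfl⟩) | (rfl | rfl)) <;>
      first
      | exact Option.noConfusion hh
      | (injection hh with hh; subst hh)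
      | injection hh
    · -- fact
      exact canonM_holds.mpr ⟨Nat.zero_le n, hinit ▸ hl⟩
    · -- executability rule
      have hprem : e.prem ⊆ ss t := fun l hl =>
        (canonM_holds.mp (hpos ⟨l, hl, rfl⟩)).2
      exact canonM_possible.mpr ⟨ht, e, he, rfl, hprem⟩
    · -- dynamic rule
      obtain ⟨-, hact⟩ := canonM_occ.mp (hpos (Set.mem_insert _ _))
      have hprem : d.prem ⊆ ss t := fun l hl =>
        (canonM_holds.mp (hpos (Set.mem_insert_of_mem _ ⟨l, hl, rfl⟩))).2
      have heff : d.concl ∈ directEffects P.dom (acts t) (ss t) :=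
        ⟨d, hd, hact, rfl, hprem⟩
      exact canonM_holds.mpr ⟨ht, (hstep t ht).2.2.1 (Or.inl heff)⟩
    · -- static rule
      have hprem : sl.prem ⊆ ss t := fun l hl =>
        (canonM_holds.mp (hpos ⟨l, hl, rfl⟩)).2
      exact canonM_holds.mpr ⟨ht, (hstate t ht).2.2 sl hsl hprem⟩
    · -- inertia rule
      have h1 : l ∈ ss t := (canonM_holds.mp (hpos rfl)).2
      have h2 : PAtom.holds l.compl (t + 1) ∉ canonM P n acts ss := fun hm =>
        Set.eq_empty_iff_forall_notMem.mp hneg _ ⟨rfl, hm⟩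
      have h3 : l.compl ∉ ss (t + 1) := fun hm => h2 (canonM_holds.mpr ⟨ht, hm⟩)
      exact canonM_holds.mpr
        ⟨ht, mem_of_compl_not_mem (hstate (t + 1) ht).1 h3⟩
    · -- goal rule
      exact canonM_goal
  · -- ReductClosed: choice rules
    intro c hc hneg hpos a ha haM
    exact haM
  · -- minimality
    rintro X ⟨hXn, hXc⟩
    have hocc : ∀ t < n, PAtom.occ (acts t) t ∈ X := by
      intro t ht
      exact hXc _ (mem_choice ht) (Set.empty_inter _) (Set.empty_subset _)
        _ ⟨acts t, rfl⟩ (canonM_occ.mpr ⟨ht, rfl⟩)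
    have hholds : ∀ t, t ≤ n → ∀ l ∈ ss t, PAtom.holds l t ∈ X := by
      intro t
      induction t with
      | zero =>
        intro _ l hl
        exact hXn _ (mem_norm_fact (hinit ▸ hl)) (Set.empty_inter _)
          (Set.empty_subset _) _ rfl
      | succ t iht =>
        intro hle l hl
        have ht : t < n := Nat.lt_of_succ_le hle
        have htle : t ≤ n := Nat.le_of_lt ht
        have hcl := (hstep t ht).2.2
        have hsub : ss (t + 1) ⊆
            {l' | l' ∈ ss (t + 1) ∧ PAtom.holds l' (t + 1) ∈ X} := by
          apply hcl.2.2.2 _ ?_ ?_ ?_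
          · rintro l' (heff | ⟨h1, h2⟩)
            · obtain ⟨d, hd, hact, hconcl, hprem⟩ := heff
              subst hconcl
              refine ⟨hcl.1 (Or.inl ⟨d, hd, hact, rfl, hprem⟩), ?_⟩
              refine hXn _ (mem_norm_dyn hd ht) (Set.empty_inter _) ?_ _ rfl
              rintro x (rfl | ⟨l'', hl'', rfl⟩)
              · rw [hact]; exact hocc t ht
              · exact iht htle l'' (hprem hl'')
            · refine ⟨h2, ?_⟩
              refine hXn _ (mem_norm_inertia l' ht) ?_ ?_ _ rfl
              · refine Set.singleton_inter_eq_empty.mpr fun hm => ?_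
                exact compl_not_mem (hstate (t + 1) hle).2.1 h2
                  (canonM_holds.mp hm).2
              · intro x hx
                rw [Set.mem_singleton_iff] at hx
                subst hx
                exact iht htle l' h1
          · exact fun f hf => (hstate (t + 1) hle).2.1 f ⟨hf.1.1, hf.2.1⟩
          · intro rl hrl hsubw
            have hp1 : rl.prem ⊆ ss (t + 1) := fun x hx => (hsubw hx).1
            refine ⟨(hstate (t + 1) hle).2.2 rl hrl hp1, ?_⟩
            refine hXn _ (mem_norm_static hrl hle) (Set.empty_inter _) ?_ _ rfl
            rintro x ⟨l'', hl'', rfl⟩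
            exact (hsubw hl'').2
        exact (hsub hl).2
    have hposs : ∀ t ≤ n, ∀ a : A,
        Executable P.dom a (ss t) → PAtom.possible a t ∈ X := by
      rintro t ht a ⟨e, he, rfl, hprem⟩
      refine hXn _ (mem_norm_exec he ht) (Set.empty_inter _) ?_ _ rfl
      rintro x ⟨l, hl, rfl⟩
      exact hholds t ht l (hprem hl)
    have hgl : PAtom.goal ∈ X := by
      refine hXn _ mem_norm_goal (Set.empty_inter _) ?_ _ rfl
      rintro x ⟨l, hl, rfl⟩
      exact hholds n le_rfl l (hgoal hl)
    rintro x (⟨t, ht, l, hl, rfl⟩ | ⟨t, ht, rfl⟩ | ⟨t, ht, a, ha, rfl⟩ | rfl)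
    · exact hholds t ht l hl
    · exact hocc t ht
    · exact hposs t ht a ha
    · exact hgl

end ASPAux
namespace ASPAux

variable {F A : Type} {P : PlanningProblem F A} {n : ℕ}

lemma mem_norm_occc (a : A) {t : ℕ} (ht : t < n) :
    (⟨none, {PAtom.occ a t}, {PAtom.possible a t}⟩ : NRule (PAtom F A)) ∈
      (PiProgram P n).normals :=
  Or.inl (Or.inl (Or.inl (Or.inr ⟨a, t, ht, rfl⟩)))

lemma mem_norm_fluentc (f : F) {t : ℕ} (ht : t ≤ n) :
    (⟨none, {PAtom.holds (Lit.pos f) t, PAtom.holds (Lit.neg f) t}, ∅⟩ :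
      NRule (PAtom F A)) ∈ (PiProgram P n).normals :=
  Or.inl (Or.inr ⟨f, t, ht, rfl⟩)

lemma mem_norm_notgoal :
    (⟨none, ∅, {PAtom.goal}⟩ : NRule (PAtom F A)) ∈ (PiProgram P n).normals :=
  Or.inr (Or.inr rfl)

end ASPAux

namespace ASPBack

open ASPAux

variable {F A : Type} {P : PlanningProblem F A} {n : ℕ} {acts : ℕ → A}
  {M : Set (PAtom F A)}

/-- The states read off an answer set. -/
def S (M : Set (PAtom F A)) : ℕ → Set (Lit F) :=
  fun t => {l | PAtom.holds l t ∈ M}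

section Back

variable (hcons : ConsistentTheory P) (hAS : AnswerSet (PiProgram P n) M)
  (hoccM : ∀ i < n, PAtom.occ (acts i) i ∈ M)

include hAS

lemma Scons : ∀ t ≤ n, ConsistentLits (S M (F := F) t) := by
  intro t ht f hf
  refine hAS.1 _ (mem_norm_fluentc f ht) rfl ⟨?_, Set.empty_inter _⟩
  rintro x (rfl | rfl)
  · exact hf.1
  · exact hf.2

include hcons in
lemma S_zero : S M (F := F) 0 = P.init := by
  have hsub : P.init ⊆ S M 0 := fun l hl =>
    hAS.2.2.1.1 _ (mem_norm_fact hl) (Set.empty_inter _) (Set.empty_subset _) _ rfl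
  refine Set.Subset.antisymm ?_ hsub
  intro l hl
  by_contra hni
  exact compl_not_mem (Scons hAS 0 (Nat.zero_le n)) hl
    (hsub (compl_mem_of_not_mem hcons.2.1 hni))

include hoccM in
lemma occ_unique : ∀ t < n, ∀ a : A, PAtom.occ a t ∈ M → a = acts t := by
  intro t ht a ha
  have hu := hAS.2.1 _ (mem_choice ht) (Set.empty_subset _) (Set.empty_inter _)
  have := hu.unique ⟨⟨a, rfl⟩, ha⟩ ⟨⟨acts t, rfl⟩, hoccM t ht⟩
  injection this with h1 h2

include hcons in
lemma S_state : ∀ t ≤ n, IsState P.dom (S M (F := F) t) := by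
  intro t
  induction t with
  | zero => intro _; exact (S_zero hcons hAS) ▸ hcons.2
  | succ t iht =>
    intro hle
    have ht : t < n := Nat.lt_of_succ_le hle
    have hst := iht (Nat.le_of_lt ht)
    have hiner : ∀ l ∈ S M (F := F) t,
        l ∈ S M (F := F) (t + 1) ∨ l.compl ∈ S M (F := F) (t + 1) := by
      intro l hl
      by_cases hmem : PAtom.holds l.compl (t + 1) ∈ M
      · exact Or.inr hmem
      · refine Or.inl (hAS.2.2.1.1 _ (mem_norm_inertia l ht)
          (Set.singleton_inter_eq_empty.mpr hmem) ?_ _ rfl)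
        rintro x rfl
        exact hl
    refine ⟨?_, Scons hAS (t + 1) hle, ?_⟩
    · intro f
      rcases hst.1 f with h | h
      · rcases hiner _ h with h' | h'
        · exact Or.inl h'
        · exact Or.inr h'
      · rcases hiner _ h with h' | h'
        · exact Or.inr h'
        · exact Or.inl h'
    · intro rl hrl hprem
      refine hAS.2.2.1.1 _ (mem_norm_static hrl hle) (Set.empty_inter _) ?_ _ rfl
      rintro x ⟨l, hl, rfl⟩
      exact hprem hl

include hoccM in
lemma S_exec : ∀ t < n, Executable P.dom (acts t) (S M (F := F) t) := by
  intro t ht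
  have hposs : PAtom.possible (acts t) t ∈ M := by
    by_contra hnp
    refine hAS.1 _ (mem_norm_occc (acts t) ht) rfl
      ⟨?_, Set.singleton_inter_eq_empty.mpr hnp⟩
    rintro x rfl
    exact hoccM t ht
  by_contra hne
  have hX : ReductClosed (PiProgram P n) M
      {x ∈ M | x ≠ PAtom.possible (acts t) t} := by
    constructor
    · intro r hr hrneg hrpos h hh
      have hM : h ∈ M :=
        hAS.2.2.1.1 r hr hrneg (fun x hx => (hrpos hx).1) h hh
      refine ⟨hM, ?_⟩
      rcases normals_cases hr with
        (((((((⟨l, hl, rfl⟩ | ⟨e, he, t', ht', rfl⟩) | ⟨d, hd, t', ht', rfl⟩) |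
          ⟨sl, hsl, t', ht', rfl⟩) | ⟨a, t', ht', rfl⟩) | ⟨l, t', ht', rfl⟩) |
          ⟨f, t', ht', rfl⟩) | (rfl | rfl)) <;>
        first
        | exact Option.noConfusion hh
        | (injection hh with hh; subst hh)
        | injection hh
      · intro heq; exact absurd heq (by simp)
      · -- exec rule
        intro heq
        injection heq with h1 h2
        subst h2
        refine hne ⟨e, he, h1, ?_⟩
        intro l hl
        exact (hrpos ⟨l, hl, rfl⟩).1
      · intro heq; exact absurd heq (by simp)
      · intro heq; exact absurd heq (by simp)
      · intro heq; exact absurd heq (by simp)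
      · intro heq; exact absurd heq (by simp)
    · intro c hc hcneg hcpos a ha haM
      obtain ⟨t', ht', rfl⟩ := choice_cases hc
      obtain ⟨a', rfl⟩ := ha
      exact ⟨haM, by simp⟩
  exact (hAS.2.2.2 _ hX hposs).2 rfl

include hcons hoccM in
lemma S_step : ∀ t < n,
    S M (F := F) (t + 1) ∈ Phi P.dom (acts t) (S M (F := F) t) := by
  intro t ht
  have hle : t + 1 ≤ n := Nat.succ_le_of_lt ht
  have hS1 := S_state hcons hAS (t + 1) hle
  refine ⟨S_exec hAS hoccM t ht, hS1, ?_, hS1.2.1, hS1.2.2, ?_⟩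
  · -- u ⊆ S (t+1)
    rintro l (heff | ⟨h1, h2⟩)
    · obtain ⟨d, hd, hact, rfl, hprem⟩ := heff
      refine hAS.2.2.1.1 _ (mem_norm_dyn hd ht) (Set.empty_inter _) ?_ _ rfl
      rintro x (rfl | ⟨l', hl', rfl⟩)
      · exact hact ▸ hoccM t ht
      · exact hprem hl'
    · exact h2
  · -- minimality of the closure
    intro w hu hwc hwcl
    have hX : ReductClosed (PiProgram P n) M
        {x ∈ M | ∀ l : Lit F, x = PAtom.holds l (t + 1) → l ∈ w} := by
      constructor
      · intro r hr hrneg hrpos h hh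
        have hM : h ∈ M :=
          hAS.2.2.1.1 r hr hrneg (fun x hx => (hrpos hx).1) h hh
        refine ⟨hM, ?_⟩
        rcases normals_cases hr with
          (((((((⟨l0, hl0, rfl⟩ | ⟨e, he, t', ht', rfl⟩) | ⟨d, hd, t', ht', rfl⟩) |
            ⟨sl, hsl, t', ht', rfl⟩) | ⟨a, t', ht', rfl⟩) | ⟨l0, t', ht', rfl⟩) |
            ⟨f, t', ht', rfl⟩) | (rfl | rfl)) <;>
          first
          | exact Option.noConfusion hh
          | (injection hh with hh; subst hh)
          | injection hh
        · -- fact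
          intro l heq
          injection heq with h1 h2
          omega
        · -- exec
          intro l heq; exact absurd heq (by simp)
        · -- dynamic
          intro l heq
          injection heq with h1 h2
          have ht'' : t' = t := by omega
          subst ht''
          subst h1
          have hact : d.act = acts t' :=
            occ_unique hAS hoccM t' ht d.act (hrpos (Set.mem_insert _ _)).1
          have hprem : d.prem ⊆ S M (F := F) t' := fun l' hl' =>
            (hrpos (Set.mem_insert_of_mem _ ⟨l', hl', rfl⟩)).1
          exact hu (Or.inl ⟨d, hd, hact, rfl, hprem⟩)
        · -- static
          intro l heq
          injection heq with h1 h2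
          subst h2
          subst h1
          refine hwcl sl hsl ?_
          intro l' hl'
          exact (hrpos ⟨l', hl', rfl⟩).2 l' rfl
        · -- inertia
          intro l heq
          injection heq with h1 h2
          have ht'' : t' = t := by omega
          subst ht''
          subst h1
          have hl0t : l0 ∈ S M (F := F) t' := (hrpos rfl).1
          have hcompl : l0.compl ∉ S M (F := F) (t' + 1) := fun hm =>
            Set.eq_empty_iff_forall_notMem.mp hrneg _ ⟨rfl, hm⟩
          have hl0t1 : l0 ∈ S M (F := F) (t' + 1) :=
            mem_of_compl_not_mem hS1.1 hcompl
          exact hu (Or.inr ⟨hl0t, hl0t1⟩)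
        · -- goal
          intro l heq; exact absurd heq (by simp)
      · intro c hc hcneg hcpos a ha haM
        obtain ⟨t', ht', rfl⟩ := choice_cases hc
        obtain ⟨a', rfl⟩ := ha
        exact ⟨haM, fun l heq => absurd heq (by simp)⟩
    intro l hl
    exact (hAS.2.2.2 _ hX hl).2 l rfl

lemma S_goal : P.goal ⊆ S M (F := F) n := by
  have hg : PAtom.goal ∈ M := by
    by_contra hng
    exact hAS.1 _ mem_norm_notgoal rfl
      ⟨Set.empty_subset _, Set.singleton_inter_eq_empty.mpr hng⟩
  by_contra hng
  rw [Set.not_subset] at hng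
  obtain ⟨l, hlg, hln⟩ := hng
  have hX : ReductClosed (PiProgram P n) M {x ∈ M | x ≠ PAtom.goal} := by
    constructor
    · intro r hr hrneg hrpos h hh
      have hM : h ∈ M :=
        hAS.2.2.1.1 r hr hrneg (fun x hx => (hrpos hx).1) h hh
      refine ⟨hM, ?_⟩
      rcases normals_cases hr with
        (((((((⟨l0, hl0, rfl⟩ | ⟨e, he, t', ht', rfl⟩) | ⟨d, hd, t', ht', rfl⟩) |
          ⟨sl, hsl, t', ht', rfl⟩) | ⟨a, t', ht', rfl⟩) | ⟨l0, t', ht', rfl⟩) |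
          ⟨f, t', ht', rfl⟩) | (rfl | rfl)) <;>
        first
        | exact Option.noConfusion hh
        | (injection hh with hh; subst hh)
        | injection hh
      · exact (by simp)
      · exact (by simp)
      · exact (by simp)
      · exact (by simp)
      · exact (by simp)
      · -- goal rule
        exact absurd ((hrpos ⟨l, hlg, rfl⟩).1) hln
    · intro c hc hcneg hcpos a ha haM
      obtain ⟨t', ht', rfl⟩ := choice_cases hc
      obtain ⟨a', rfl⟩ := ha
      exact ⟨haM, by simp⟩
  exact (hAS.2.2.2 _ hX hg).2 rfl

end Back

end ASPBack
/-- **Answer set planning for deterministic theories**: `a_0,...,a_{n-1}` is a plan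
achieving `Δ` iff there is an answer set `M` of `Π(P,n)` with `occ(a_i,i) ∈ M` for
all `i < n`. -/
theorem answer_set_planning_deterministic {F A : Type}
    (P : PlanningProblem F A) (n : ℕ) (hcons : ConsistentTheory P)
    (hdet : Deterministic P.dom)
    (acts : ℕ → A) :
    ((PhiHat P.dom (List.ofFn (fun i : Fin n => acts i)) P.init).Nonempty ∧
      ∀ s ∈ PhiHat P.dom (List.ofFn (fun i : Fin n => acts i)) P.init,
        P.goal ⊆ s) ↔
    (∃ M : Set (PAtom F A), AnswerSet (PiProgram P n) M ∧
        ∀ i < n, PAtom.occ (acts i) i ∈ M) := by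
  constructor
  · rintro ⟨⟨s'', hs''⟩, hgoalall⟩
    obtain ⟨ss, h0, hn, hstep⟩ := ASPAux.phiHat_chain P.dom n acts P.init s'' hs''
    have hstate : ∀ t ≤ n, IsState P.dom (ss t) := by
      intro t ht
      cases t with
      | zero => exact h0 ▸ hcons.2
      | succ t => exact (hstep t (Nat.lt_of_succ_le ht)).2.1
    have hg : P.goal ⊆ ss n := by rw [hn]; exact hgoalall s'' hs''
    refine ⟨ASPAux.canonM P n acts ss,
      ASPAux.canonM_answerSet hstate hstep h0 hg, ?_⟩
    intro i hi
    exact ASPAux.canonM_occ.mpr ⟨hi, rfl⟩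
  · rintro ⟨M, hAS, hoccM⟩
    have hS0 : ASPBack.S M (F := F) 0 = P.init := ASPBack.S_zero hcons hAS
    have hstate0 : IsState P.dom (ASPBack.S M (F := F) 0) := hS0 ▸ hcons.2
    have hstep := ASPBack.S_step hcons hAS hoccM
    have hmem := ASPAux.chain_phiHat P.dom hdet n acts (ASPBack.S M) hstate0 hstep
    rw [hS0] at hmem
    refine ⟨⟨_, hmem⟩, ?_⟩
    intro s hs
    have hs' : s ∈ PhiHat P.dom (List.ofFn fun i : Fin n => acts i)
        (ASPBack.S M (F := F) 0) := by rw [hS0]; exact hs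
    have heq := ASPAux.phiHat_unique P.dom hdet n acts (ASPBack.S M)
      hstate0 hstep s hs'
    rw [heq]
    exact ASPBack.S_goal hAS
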